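/- Let d ≥ 6. There exists a nonnegative biquadratic form in d+d variables vanishing on the diagonal that is not a sum of squares of polynomials. Equivalently, there exists a map c : ℝ^d → S^d with homogeneous degree-2 polynomial entries such that c(x) is positive semidefinite for all x and c(x)x = 0 for all x, yet c admits no representation c(x) = Σ_p A_p x x^⊤ A_p^⊤ with finitely many skew-symmetric matrices A_p ∈ ℝ^{d×d}. -/
import Mathlib

open Matrix

/-- A function `ℝ^d → ℝ` is (the evaluation of) a homogeneous polynomial of degree `k`. -/
def IsHomPolyFun (d k : ℕ) (f : (Fin d → ℝ) → ℝ) : Prop :=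
  ∃ P : MvPolynomial (Fin d) ℝ, P.IsHomogeneous k ∧ ∀ x, f x = MvPolynomial.eval x P

namespace Stmt9Aux

set_option maxHeartbeats 2000000

noncomputable section

def auxι (d : ℕ) (hd : 6 ≤ d) (k : Fin 6) : Fin d := ⟨k.1, lt_of_lt_of_le k.2 hd⟩

@[simp] lemma auxι_val (d : ℕ) (hd : 6 ≤ d) (k : Fin 6) : (auxι d hd k).1 = k.1 := rfl

def cRow0 : ℕ → (Fin 6 → ℝ) → ℝ := fun j u =>
  if j = 0 then (2*u 5^2 + 2*u 4^2 + 2*u 3^2)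
  else if j = 1 then (0)
  else if j = 2 then (0)
  else if j = 3 then (-2*u 2*u 5 - 2*u 1*u 4 - 2*u 0*u 3)
  else if j = 4 then (2*u 1*u 3 - 2*u 0*u 4)
  else if j = 5 then (2*u 2*u 3 - 2*u 0*u 5)
  else 0

def cRow1 : ℕ → (Fin 6 → ℝ) → ℝ := fun j u =>
  if j = 0 then (0)
  else if j = 1 then (2*u 5^2 + 2*u 4^2 + 2*u 3^2)
  else if j = 2 then (0)
  else if j = 3 then (-2*u 1*u 3 + 2*u 0*u 4)
  else if j = 4 then (-2*u 2*u 5 - 2*u 1*u 4 - 2*u 0*u 3)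
  else if j = 5 then (2*u 2*u 4 - 2*u 1*u 5)
  else 0

def cRow2 : ℕ → (Fin 6 → ℝ) → ℝ := fun j u =>
  if j = 0 then (0)
  else if j = 1 then (0)
  else if j = 2 then (2*u 5^2 + 2*u 4^2 + 2*u 3^2)
  else if j = 3 then (-2*u 2*u 3 + 2*u 0*u 5)
  else if j = 4 then (-2*u 2*u 4 + 2*u 1*u 5)
  else if j = 5 then (-2*u 2*u 5 - 2*u 1*u 4 - 2*u 0*u 3)
  else 0

def cRow3 : ℕ → (Fin 6 → ℝ) → ℝ := fun j u =>
  if j = 0 then (-2*u 2*u 5 - 2*u 1*u 4 - 2*u 0*u 3)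
  else if j = 1 then (-2*u 1*u 3 + 2*u 0*u 4)
  else if j = 2 then (-2*u 2*u 3 + 2*u 0*u 5)
  else if j = 3 then (2*u 2^2 + 2*u 1^2 + 2*u 0^2)
  else if j = 4 then (0)
  else if j = 5 then (0)
  else 0

def cRow4 : ℕ → (Fin 6 → ℝ) → ℝ := fun j u =>
  if j = 0 then (2*u 1*u 3 - 2*u 0*u 4)
  else if j = 1 then (-2*u 2*u 5 - 2*u 1*u 4 - 2*u 0*u 3)
  else if j = 2 then (-2*u 2*u 4 + 2*u 1*u 5)
  else if j = 3 then (0)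
  else if j = 4 then (2*u 2^2 + 2*u 1^2 + 2*u 0^2)
  else if j = 5 then (0)
  else 0

def cRow5 : ℕ → (Fin 6 → ℝ) → ℝ := fun j u =>
  if j = 0 then (2*u 2*u 3 - 2*u 0*u 5)
  else if j = 1 then (2*u 2*u 4 - 2*u 1*u 5)
  else if j = 2 then (-2*u 2*u 5 - 2*u 1*u 4 - 2*u 0*u 3)
  else if j = 3 then (0)
  else if j = 4 then (0)
  else if j = 5 then (2*u 2^2 + 2*u 1^2 + 2*u 0^2)
  else 0

def cT : ℕ → ℕ → (Fin 6 → ℝ) → ℝ := fun i j u =>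
  if i = 0 then cRow0 j u
  else if i = 1 then cRow1 j u
  else if i = 2 then cRow2 j u
  else if i = 3 then cRow3 j u
  else if i = 4 then cRow4 j u
  else if i = 5 then cRow5 j u
  else 0

lemma cRow0_out (j : ℕ) (u : Fin 6 → ℝ) (h : 6 ≤ j) : cRow0 j u = 0 := by
  unfold cRow0
  rw [if_neg (by omega), if_neg (by omega), if_neg (by omega), if_neg (by omega),
    if_neg (by omega), if_neg (by omega)]

lemma cRow1_out (j : ℕ) (u : Fin 6 → ℝ) (h : 6 ≤ j) : cRow1 j u = 0 := by
  unfold cRow1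
  rw [if_neg (by omega), if_neg (by omega), if_neg (by omega), if_neg (by omega),
    if_neg (by omega), if_neg (by omega)]

lemma cRow2_out (j : ℕ) (u : Fin 6 → ℝ) (h : 6 ≤ j) : cRow2 j u = 0 := by
  unfold cRow2
  rw [if_neg (by omega), if_neg (by omega), if_neg (by omega), if_neg (by omega),
    if_neg (by omega), if_neg (by omega)]

lemma cRow3_out (j : ℕ) (u : Fin 6 → ℝ) (h : 6 ≤ j) : cRow3 j u = 0 := by
  unfold cRow3
  rw [if_neg (by omega), if_neg (by omega), if_neg (by omega), if_neg (by omega),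
    if_neg (by omega), if_neg (by omega)]

lemma cRow4_out (j : ℕ) (u : Fin 6 → ℝ) (h : 6 ≤ j) : cRow4 j u = 0 := by
  unfold cRow4
  rw [if_neg (by omega), if_neg (by omega), if_neg (by omega), if_neg (by omega),
    if_neg (by omega), if_neg (by omega)]

lemma cRow5_out (j : ℕ) (u : Fin 6 → ℝ) (h : 6 ≤ j) : cRow5 j u = 0 := by
  unfold cRow5
  rw [if_neg (by omega), if_neg (by omega), if_neg (by omega), if_neg (by omega),
    if_neg (by omega), if_neg (by omega)]

lemma cT_out_i (i j : ℕ) (u : Fin 6 → ℝ) (h : 6 ≤ i) : cT i j u = 0 := by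
  unfold cT
  rw [if_neg (by omega), if_neg (by omega), if_neg (by omega), if_neg (by omega),
    if_neg (by omega), if_neg (by omega)]

lemma cT_out_j (i j : ℕ) (u : Fin 6 → ℝ) (h : 6 ≤ j) : cT i j u = 0 := by
  unfold cT
  split_ifs <;>
    first
      | rfl
      | exact cRow0_out j u h
      | exact cRow1_out j u h
      | exact cRow2_out j u h
      | exact cRow3_out j u h
      | exact cRow4_out j u h
      | exact cRow5_out j u h

lemma cT_symm (i j : ℕ) (u : Fin 6 → ℝ) : cT i j u = cT j i u := by
  by_cases hi : i < 6
  · by_cases hj : j < 6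
    · interval_cases i <;> interval_cases j <;>
        (norm_num [cT, cRow0, cRow1, cRow2, cRow3, cRow4, cRow5]; try ring)
    · rw [cT_out_j i j u (by omega), cT_out_i j i u (by omega)]
  · rw [cT_out_i i j u (by omega), cT_out_j j i u (by omega)]

def Q2E (p1 p2 p3 q1 q2 q3 r1 r2 r3 s1 s2 s3 : ℝ) : ℝ :=
  2*q3^2*r3^2 + 2*q3^2*r2^2 + 2*q3^2*r1^2 + 2*q2^2*r3^2 + 2*q2^2*r2^2 + 2*q2^2*r1^2 + 2*q1^2*r3^2 + 2*q1^2*r2^2 + 2*q1^2*r1^2 - 4*p3*q3*r3*s3 - 4*p3*q3*r2*s2 - 4*p3*q3*r1*s1 - 4*p3*q2*r3*s2 + 4*p3*q2*r2*s3 - 4*p3*q1*r3*s1 + 4*p3*q1*r1*s3 + 2*p3^2*s3^2 + 2*p3^2*s2^2 + 2*p3^2*s1^2 + 4*p2*q3*r3*s2 - 4*p2*q3*r2*s3 - 4*p2*q2*r3*s3 - 4*p2*q2*r2*s2 - 4*p2*q2*r1*s1 - 4*p2*q1*r2*s1 + 4*p2*q1*r1*s2 + 2*p2^2*s3^2 +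 2*p2^2*s2^2 + 2*p2^2*s1^2 + 4*p1*q3*r3*s1 - 4*p1*q3*r1*s3 + 4*p1*q2*r2*s1 - 4*p1*q2*r1*s2 - 4*p1*q1*r3*s3 - 4*p1*q1*r2*s2 - 4*p1*q1*r1*s1 + 2*p1^2*s3^2 + 2*p1^2*s2^2 + 2*p1^2*s1^2

lemma csq (s00 s01 s02 s11 s12 s22 v1 v2 v3 : ℝ)
    (hZ : v1*(s00*v1+s01*v2+s02*v3) + v2*(s01*v1+s11*v2+s12*v3) + v3*(s02*v1+s12*v2+s22*v3) = 0) :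
    (v1^2+v2^2+v3^2)^2 * (2*(s00^2+s11^2+s22^2+2*s01^2+2*s02^2+2*s12^2) - (s00+s11+s22)^2)
      = (-s01*v3^2 - s01*v2^2 - s00*v1*v2)^2 + (-s02*v3^2 - s02*v2^2 - s00*v1*v3)^2 + (-s01*v3^2 - s01*v2^2 - s00*v1*v2)^2 + (-s11*v3^2 - s11*v2^2 + s00*v3^2 + s00*v1^2)^2 + (-s12*v3^2 - s12*v2^2 - s00*v2*v3)^2 + (-s02*v3^2 - s02*v2^2 - s00*v1*v3)^2 + (-s12*v3^2 - s12*v2^2 - s00*v2*v3)^2 + (-s22*v3^2 - s22*v2^2 + s00*v2^2 + s00*v1^2)^2 + (s02*v1*v2 - s01*v1*v3)^2 + (s11*v1*v2 + s01*v3^2 + s01*v1^2)^2 + (s12*v1*v2 - s01*v2*v3)^2 + (s02*v1*v2 - s01*v1*v3)^2 + (s12*v1*v2 - s01*v2*v3)^2 + (s22*v1*v2 + s01*v2^2 + s01*v1^2)^2 + (-s02*v1*v2 + s01*v1*v3)^2 + (s11*v1*v3 + s02*v3^2 + s02*v1^2)^2 + (s12*v1*v3 - s02*v2*v3)^2 +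 (s12*v1*v3 - s02*v2*v3)^2 + (s22*v1*v3 + s02*v2^2 + s02*v1^2)^2 + (s11*v1*v2 + s01*v3^2 + s01*v1^2)^2 + (s12*v1*v2 - s01*v2*v3)^2 + (s02*v1*v2 - s01*v1*v3)^2 + (s12*v1*v2 - s01*v2*v3)^2 + (s22*v1*v2 + s01*v2^2 + s01*v1^2)^2 + (-s12*v3^2 - s12*v1^2 - s11*v2*v3)^2 + (-s11*v1*v3 - s02*v3^2 - s02*v1^2)^2 + (-s12*v3^2 - s12*v1^2 - s11*v2*v3)^2 + (-s22*v3^2 - s22*v1^2 + s11*v2^2 + s11*v1^2)^2 + (-s12*v1*v3 + s02*v2*v3)^2 + (s22*v2*v3 + s12*v2^2 + s12*v1^2)^2 + (s12*v1*v3 - s02*v2*v3)^2 + (s22*v1*v3 + s02*v2^2 + s02*v1^2)^2 + (s22*v2*v3 + s12*v2^2 + s12*v1^2)^2 := by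
  linear_combination (v1*(s00*v1+s01*v2+s02*v3) + v2*(s01*v1+s11*v2+s12*v3) + v3*(s02*v1+s12*v2+s22*v3) - 2*(v1^2+v2^2+v3^2)*(s00+s11+s22)) * hZ

lemma mainCase (p1 p2 p3 q1 q2 q3 r1 r2 r3 s1 s2 s3 : ℝ)
    (hpos : 0 < (q2*s3 - q3*s2)^2 + (q3*s1 - q1*s3)^2 + (q1*s2 - q2*s1)^2) :
    0 ≤ Q2E p1 p2 p3 q1 q2 q3 r1 r2 r3 s1 s2 s3 := by
  have hcs := csq (2*(p1*s1 - r1*q1)) ((p1*s2 - r1*q2) + (p2*s1 - r2*q1)) ((p1*s3 - r1*q3) + (p3*s1 - r3*q1)) (2*(p2*s2 - r2*q2))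
    ((p2*s3 - r2*q3) + (p3*s2 - r3*q2)) (2*(p3*s3 - r3*q3)) (q2*s3 - q3*s2) (q3*s1 - q1*s3) (q1*s2 - q2*s1) (by ring)
  have hsos : 0 ≤ ((q2*s3 - q3*s2)^2+(q3*s1 - q1*s3)^2+(q1*s2 - q2*s1)^2)^2 *
      (2*((2*(p1*s1 - r1*q1))^2+(2*(p2*s2 - r2*q2))^2+(2*(p3*s3 - r3*q3))^2+2*((p1*s2 - r1*q2) + (p2*s1 - r2*q1))^2+2*((p1*s3 - r1*q3) + (p3*s1 - r3*q1))^2+2*((p2*s3 - r2*q3) + (p3*s2 - r3*q2))^2)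
        - ((2*(p1*s1 - r1*q1))+(2*(p2*s2 - r2*q2))+(2*(p3*s3 - r3*q3)))^2) := by
    rw [hcs]; positivity
  have hG := (mul_nonneg_iff_of_pos_left (pow_pos hpos 2)).mp hsos
  have hQ : 2 * Q2E p1 p2 p3 q1 q2 q3 r1 r2 r3 s1 s2 s3 =
      2*((2*(p1*s1 - r1*q1))^2+(2*(p2*s2 - r2*q2))^2+(2*(p3*s3 - r3*q3))^2+2*((p1*s2 - r1*q2) + (p2*s1 - r2*q1))^2+2*((p1*s3 - r1*q3) + (p3*s1 - r3*q1))^2+2*((p2*s3 - r2*q3) + (p3*s2 - r3*q2))^2)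
        - ((2*(p1*s1 - r1*q1))+(2*(p2*s2 - r2*q2))+(2*(p3*s3 - r3*q3)))^2 := by
    unfold Q2E; ring
  linarith

lemma degCase1 (p1 p2 p3 q1 q2 q3 r1 r2 r3 s1 s2 s3 : ℝ)
    (hv1 : q2*s3 - q3*s2 = 0) (hv2 : q3*s1 - q1*s3 = 0) (hv3 : q1*s2 - q2*s1 = 0) (hq : q1 ≠ 0) :
    0 ≤ Q2E p1 p2 p3 q1 q2 q3 r1 r2 r3 s1 s2 s3 := by
  have hk : q1^2 * Q2E p1 p2 p3 q1 q2 q3 r1 r2 r3 s1 s2 s3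
      = 2*(q1^2+q2^2+q3^2)*((s1*p1 - q1*r1)^2 + (s1*p2 - q1*r2)^2 + (s1*p3 - q1*r3)^2) := by
    unfold Q2E; linear_combination (4*p3*q1^2*r2 - 4*p2*q1^2*r3) * hv1 + (4*p3*q1*q3*r3 - 4*p3*q1^2*r1 - 2*p3^2*q3*s1 - 2*p3^2*q1*s3 + 4*p2*q1*q3*r2 - 2*p2^2*q3*s1 - 2*p2^2*q1*s3 + 4*p1*q1*q3*r1 + 4*p1*q1^2*r3 - 2*p1^2*q3*s1 - 2*p1^2*q1*s3) * hv2 + (-4*p3*q1*q2*r3 + 2*p3^2*q2*s1 + 2*p3^2*q1*s2 - 4*p2*q1*q2*r2 + 4*p2*q1^2*r1 + 2*p2^2*q2*s1 + 2*p2^2*q1*s2 - 4*p1*q1*q2*r1 - 4*p1*q1^2*r2 + 2*p1^2*q2*s1 + 2*p1^2*q1*s2) * hv3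
  have hq2 : 0 < q1^2 := lt_of_le_of_ne (sq_nonneg q1) (Ne.symm (pow_ne_zero 2 hq))
  have h0 : 0 ≤ q1^2 * Q2E p1 p2 p3 q1 q2 q3 r1 r2 r3 s1 s2 s3 := by rw [hk]; positivity
  exact (mul_nonneg_iff_of_pos_left hq2).mp h0

lemma degCase2 (p1 p2 p3 q1 q2 q3 r1 r2 r3 s1 s2 s3 : ℝ)
    (hv1 : q2*s3 - q3*s2 = 0) (hv2 : q3*s1 - q1*s3 = 0) (hv3 : q1*s2 - q2*s1 = 0) (hq : q2 ≠ 0) :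
    0 ≤ Q2E p1 p2 p3 q1 q2 q3 r1 r2 r3 s1 s2 s3 := by
  have hk : q2^2 * Q2E p1 p2 p3 q1 q2 q3 r1 r2 r3 s1 s2 s3
      = 2*(q1^2+q2^2+q3^2)*((s2*p1 - q2*r1)^2 + (s2*p2 - q2*r2)^2 + (s2*p3 - q2*r3)^2) := by
    unfold Q2E; linear_combination (-4*p3*q2*q3*r3 + 4*p3*q2^2*r2 + 2*p3^2*q3*s2 + 2*p3^2*q2*s3 - 4*p2*q2*q3*r2 - 4*p2*q2^2*r3 + 2*p2^2*q3*s2 + 2*p2^2*q2*s3 - 4*p1*q2*q3*r1 + 2*p1^2*q3*s2 + 2*p1^2*q2*s3) * hv1 + (-4*p3*q2^2*r1 + 4*p1*q2^2*r3) * hv2 + (4*p3*q1*q2*r3 - 2*p3^2*q2*s1 - 2*p3^2*q1*s2 + 4*p2*q2^2*r1 + 4*p2*q1*q2*r2 - 2*p2^2*q2*s1 - 2*p2^2*q1*s2 - 4*p1*q2^2*r2 + 4*p1*q1*q2*r1 - 2*p1^2*q2*s1 - 2*p1^2*q1*s2) * hv3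
  have hq2 : 0 < q2^2 := lt_of_le_of_ne (sq_nonneg q2) (Ne.symm (pow_ne_zero 2 hq))
  have h0 : 0 ≤ q2^2 * Q2E p1 p2 p3 q1 q2 q3 r1 r2 r3 s1 s2 s3 := by rw [hk]; positivity
  exact (mul_nonneg_iff_of_pos_left hq2).mp h0

lemma degCase3 (p1 p2 p3 q1 q2 q3 r1 r2 r3 s1 s2 s3 : ℝ)
    (hv1 : q2*s3 - q3*s2 = 0) (hv2 : q3*s1 - q1*s3 = 0) (hv3 : q1*s2 - q2*s1 = 0) (hq : q3 ≠ 0) :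
    0 ≤ Q2E p1 p2 p3 q1 q2 q3 r1 r2 r3 s1 s2 s3 := by
  have hk : q3^2 * Q2E p1 p2 p3 q1 q2 q3 r1 r2 r3 s1 s2 s3
      = 2*(q1^2+q2^2+q3^2)*((s3*p1 - q3*r1)^2 + (s3*p2 - q3*r2)^2 + (s3*p3 - q3*r3)^2) := by
    unfold Q2E; linear_combination (4*p3*q3^2*r2 + 4*p3*q2*q3*r3 - 2*p3^2*q3*s2 - 2*p3^2*q2*s3 - 4*p2*q3^2*r3 + 4*p2*q2*q3*r2 - 4*p2*q1*q3*r1 - 2*p2^2*q3*s2 - 2*p2^2*q2*s3 + 4*p1*q2*q3*r1 + 4*p1*q1*q3*r2 - 2*p1^2*q3*s2 - 2*p1^2*q2*s3) * hv1 + (-4*p3*q3^2*r1 - 4*p3*q1*q3*r3 + 2*p3^2*q3*s1 + 2*p3^2*q1*s3 - 4*p2*q2*q3*r1 - 4*p2*q1*q3*r2 + 2*p2^2*q3*s1 + 2*p2^2*q1*s3 + 4*p1*q3^2*r3 + 4*p1*q2*q3*r2 - 4*p1*q1*q3*r1 + 2*p1^2*q3*s1 + 2*p1^2*q1*s3) *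 hv2
  have hq2 : 0 < q3^2 := lt_of_le_of_ne (sq_nonneg q3) (Ne.symm (pow_ne_zero 2 hq))
  have h0 : 0 ≤ q3^2 * Q2E p1 p2 p3 q1 q2 q3 r1 r2 r3 s1 s2 s3 := by rw [hk]; positivity
  exact (mul_nonneg_iff_of_pos_left hq2).mp h0

lemma keyIneq (p1 p2 p3 q1 q2 q3 r1 r2 r3 s1 s2 s3 : ℝ) :
    0 ≤ Q2E p1 p2 p3 q1 q2 q3 r1 r2 r3 s1 s2 s3 := by
  by_cases h1 : q2*s3 - q3*s2 = 0
  · by_cases h2 : q3*s1 - q1*s3 = 0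
    · by_cases h3 : q1*s2 - q2*s1 = 0
      · by_cases hq1 : q1 = 0
        · by_cases hq2 : q2 = 0
          · by_cases hq3 : q3 = 0
            · have hE : Q2E p1 p2 p3 q1 q2 q3 r1 r2 r3 s1 s2 s3
                  = 2*((p1^2+p2^2+p3^2)*(s1^2+s2^2+s3^2)) := by
                rw [hq1, hq2, hq3]; unfold Q2E; ring
              rw [hE]; positivity
            · exact degCase3 p1 p2 p3 q1 q2 q3 r1 r2 r3 s1 s2 s3 h1 h2 h3 hq3
          · exact degCase2 p1 p2 p3 q1 q2 q3 r1 r2 r3 s1 s2 s3 h1 h2 h3 hq2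
        · exact degCase1 p1 p2 p3 q1 q2 q3 r1 r2 r3 s1 s2 s3 h1 h2 h3 hq1
      · refine mainCase p1 p2 p3 q1 q2 q3 r1 r2 r3 s1 s2 s3 ?_
        have : 0 < (q1*s2 - q2*s1)^2 := lt_of_le_of_ne (sq_nonneg _) (Ne.symm (pow_ne_zero 2 h3))
        nlinarith [sq_nonneg (q2*s3 - q3*s2), sq_nonneg (q3*s1 - q1*s3)]
    · refine mainCase p1 p2 p3 q1 q2 q3 r1 r2 r3 s1 s2 s3 ?_
      have : 0 < (q3*s1 - q1*s3)^2 := lt_of_le_of_ne (sq_nonneg _) (Ne.symm (pow_ne_zero 2 h2))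
      nlinarith [sq_nonneg (q2*s3 - q3*s2), sq_nonneg (q1*s2 - q2*s1)]
  · refine mainCase p1 p2 p3 q1 q2 q3 r1 r2 r3 s1 s2 s3 ?_
    have : 0 < (q2*s3 - q3*s2)^2 := lt_of_le_of_ne (sq_nonneg _) (Ne.symm (pow_ne_zero 2 h1))
    nlinarith [sq_nonneg (q3*s1 - q1*s3), sq_nonneg (q1*s2 - q2*s1)]


@[simp] lemma fv0 : ((0 : Fin 6) : ℕ) = 0 := rfl
@[simp] lemma fv1 : ((1 : Fin 6) : ℕ) = 1 := rfl
@[simp] lemma fv2 : ((2 : Fin 6) : ℕ) = 2 := rfl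
@[simp] lemma fv3 : ((3 : Fin 6) : ℕ) = 3 := rfl
@[simp] lemma fv4 : ((4 : Fin 6) : ℕ) = 4 := rfl
@[simp] lemma fv5 : ((5 : Fin 6) : ℕ) = 5 := rfl

def cf (d : ℕ) (hd : 6 ≤ d) (x : Fin d → ℝ) : Matrix (Fin d) (Fin d) ℝ :=
  fun i j => cT i.1 j.1 (fun k => x (auxι d hd k))

lemma sum_red (d : ℕ) (hd : 6 ≤ d) (g : Fin d → ℝ)
    (hg : ∀ i : Fin d, 6 ≤ i.1 → g i = 0) :
    ∑ i, g i = ∑ k : Fin 6, g (auxι d hd k) := by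
  classical
  have hinj : Function.Injective (auxι d hd) := by
    intro a b hab
    exact Fin.ext (by simpa using congrArg Fin.val hab)
  have hm := Finset.sum_map Finset.univ ⟨auxι d hd, hinj⟩ g
  simp only [Function.Embedding.coeFn_mk] at hm
  rw [← hm]
  refine (Finset.sum_subset (Finset.subset_univ _) ?_).symm
  intro i _ hi
  refine hg i ?_
  by_contra hlt
  push_neg at hlt
  exact hi (Finset.mem_map.mpr ⟨⟨i.1, hlt⟩, Finset.mem_univ _, Fin.ext rfl⟩)

lemma sum_red2 (d : ℕ) (hd : 6 ≤ d) (B : Fin d → Fin d → ℝ) (x y : Fin d → ℝ)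
    (hB : ∀ i j : Fin d, 6 ≤ i.1 ∨ 6 ≤ j.1 → B i j = 0) :
    ∑ i, y i * ∑ j, B i j * x j
      = ∑ k : Fin 6, y (auxι d hd k) *
          ∑ m : Fin 6, B (auxι d hd k) (auxι d hd m) * x (auxι d hd m) := by
  rw [sum_red d hd _ (fun i hi => by
    have h0 : (∑ j, B i j * x j) = 0 :=
      Finset.sum_eq_zero (fun j _ => by rw [hB i j (Or.inl hi), zero_mul])
    rw [h0, mul_zero])]
  refine Finset.sum_congr rfl fun k _ => ?_
  congr 1
  exact sum_red d hd _ (fun j hj => by rw [hB _ j (Or.inr hj), zero_mul])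

lemma sum_red2v (d : ℕ) (hd : 6 ≤ d) (B : Matrix (Fin d) (Fin d) ℝ) (x y : Fin d → ℝ)
    (hx : ∀ i : Fin d, 6 ≤ i.1 → x i = 0) (hy : ∀ i : Fin d, 6 ≤ i.1 → y i = 0) :
    ∑ i, y i * ∑ j, B i j * x j
      = ∑ k : Fin 6, y (auxι d hd k) *
          ∑ m : Fin 6, B (auxι d hd k) (auxι d hd m) * x (auxι d hd m) := by
  rw [sum_red d hd _ (fun i hi => by rw [hy i hi, zero_mul])]
  refine Finset.sum_congr rfl fun k _ => ?_
  congr 1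
  exact sum_red d hd _ (fun j hj => by rw [hx j hj, mul_zero])

set_option maxHeartbeats 2000000 in
lemma quadform_eq (d : ℕ) (hd : 6 ≤ d) (x y : Fin d → ℝ) :
    y ⬝ᵥ (cf d hd x).mulVec y =
      Q2E (x (auxι d hd 0)) (x (auxι d hd 1)) (x (auxι d hd 2)) (x (auxι d hd 3)) (x (auxι d hd 4)) (x (auxι d hd 5))
      (y (auxι d hd 0)) (y (auxι d hd 1)) (y (auxι d hd 2)) (y (auxι d hd 3)) (y (auxι d hd 4)) (y (auxι d hd 5)) := by
  show ∑ i, y i * ∑ j, cf d hd x i j * y j = _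
  rw [sum_red2 d hd (cf d hd x) y y (fun i j hij => by
    rcases hij with h | h
    · exact cT_out_i _ _ _ h
    · exact cT_out_j _ _ _ h)]
  simp only [Fin.sum_univ_six, cf, auxι_val]
  norm_num [cT, cRow0, cRow1, cRow2, cRow3, cRow4, cRow5, Q2E]
  ring


def embV (d : ℕ) (v0 v1 v2 v3 v4 v5 : ℝ) : Fin d → ℝ := fun i =>
  if i.1 = 0 then v0 else if i.1 = 1 then v1 else if i.1 = 2 then v2
  else if i.1 = 3 then v3 else if i.1 = 4 then v4 else if i.1 = 5 then v5 else 0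

lemma embV_out (d : ℕ) (v0 v1 v2 v3 v4 v5 : ℝ) :
    ∀ i : Fin d, 6 ≤ i.1 → embV d v0 v1 v2 v3 v4 v5 i = 0 := by
  intro i hi
  unfold embV
  rw [if_neg (by omega), if_neg (by omega), if_neg (by omega), if_neg (by omega),
    if_neg (by omega), if_neg (by omega)]

set_option maxHeartbeats 2000000 in
lemma bilin_embV (d : ℕ) (hd : 6 ≤ d) (B : Matrix (Fin d) (Fin d) ℝ)
    (v0 v1 v2 v3 v4 v5 w0 w1 w2 w3 w4 w5 : ℝ) :
    (embV d w0 w1 w2 w3 w4 w5) ⬝ᵥ B.mulVec (embV d v0 v1 v2 v3 v4 v5) =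
      w0 * B (auxι d hd 0) (auxι d hd 0) * v0 + w0 * B (auxι d hd 0) (auxι d hd 1) * v1 + w0 * B (auxι d hd 0) (auxι d hd 2) * v2 + w0 * B (auxι d hd 0) (auxι d hd 3) * v3 + w0 * B (auxι d hd 0) (auxι d hd 4) * v4 + w0 * B (auxι d hd 0) (auxι d hd 5) * v5 + w1 * B (auxι d hd 1) (auxι d hd 0) * v0 + w1 * B (auxι d hd 1) (auxι d hd 1) * v1 + w1 * B (auxι d hd 1) (auxι d hd 2) * v2 + w1 * B (auxι d hd 1) (auxι d hd 3) * v3 + w1 * B (auxι d hd 1) (auxι d hd 4) * v4 + w1 * B (auxι d hd 1) (auxι d hd 5) * v5 + w2 * B (auxι d hd 2) (auxι d hd 0) * v0 + w2 * B (auxι d hd 2) (auxι d hd 1) * v1 + w2 * B (auxι d hd 2) (auxι d hd 2) * v2 + w2 * B (auxι d hd 2) (auxι d hd 3) * v3 + w2 * B (auxι d hd 2) (auxι d hd 4) * v4 + w2 * B (auxι d hd 2) (auxι d hd 5) * v5 + w3 * B (auxι d hd 3) (auxι d hd 0) * v0 + w3 * B (auxι d hd 3) (auxι d hd 1) * v1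 + w3 * B (auxι d hd 3) (auxι d hd 2) * v2 + w3 * B (auxι d hd 3) (auxι d hd 3) * v3 + w3 * B (auxι d hd 3) (auxι d hd 4) * v4 + w3 * B (auxι d hd 3) (auxι d hd 5) * v5 + w4 * B (auxι d hd 4) (auxι d hd 0) * v0 + w4 * B (auxι d hd 4) (auxι d hd 1) * v1 + w4 * B (auxι d hd 4) (auxι d hd 2) * v2 + w4 * B (auxι d hd 4) (auxι d hd 3) * v3 + w4 * B (auxι d hd 4) (auxι d hd 4) * v4 + w4 * B (auxι d hd 4) (auxι d hd 5) * v5 + w5 * B (auxι d hd 5) (auxι d hd 0) * v0 + w5 * B (auxι d hd 5) (auxι d hd 1) * v1 + w5 * B (auxι d hd 5) (auxι d hd 2) * v2 + w5 * B (auxι d hd 5) (auxι d hd 3) * v3 + w5 * B (auxι d hd 5) (auxι d hd 4) * v4 + w5 * B (auxι d hd 5) (auxι d hd 5) * v5 := by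
  show ∑ i, embV d w0 w1 w2 w3 w4 w5 i * ∑ j, B i j * embV d v0 v1 v2 v3 v4 v5 j = _
  rw [sum_red2v d hd B _ _ (embV_out d v0 v1 v2 v3 v4 v5) (embV_out d w0 w1 w2 w3 w4 w5)]
  simp only [Fin.sum_univ_six, auxι_val, embV]
  norm_num
  ring


lemma sum_mulVec' {d n : ℕ} (M : Fin n → Matrix (Fin d) (Fin d) ℝ) (x : Fin d → ℝ) :
    (∑ p, M p).mulVec x = ∑ p, (M p).mulVec x := by
  ext i
  simp only [Matrix.mulVec, dotProduct, Matrix.sum_apply, Finset.sum_apply,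
    Finset.sum_mul]
  rw [Finset.sum_comm]

lemma dot_sum_mulVec {d n : ℕ} (M : Fin n → Matrix (Fin d) (Fin d) ℝ) (x y : Fin d → ℝ) :
    y ⬝ᵥ (∑ p, M p).mulVec x = ∑ p, y ⬝ᵥ (M p).mulVec x := by
  rw [sum_mulVec']
  simp only [dotProduct, Finset.sum_apply, Finset.mul_sum]
  rw [Finset.sum_comm]

lemma quad_rep {m : Type*} [Fintype m] [DecidableEq m] (A : Matrix m m ℝ) (x y : m → ℝ) :
    y ⬝ᵥ (A * Matrix.vecMulVec x x * Aᵀ).mulVec y = (y ⬝ᵥ A.mulVec x)^2 := by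
  have h1 : Matrix.vecMulVec x x *ᵥ (Aᵀ *ᵥ y) = ((Aᵀ *ᵥ y) ⬝ᵥ x) • x := by
    ext i
    simp only [Matrix.mulVec, dotProduct, Matrix.vecMulVec_apply, Pi.smul_apply,
      smul_eq_mul, Finset.sum_mul]
    refine Finset.sum_congr rfl fun j _ => ?_
    rw [Finset.mul_sum]
    exact Finset.sum_congr rfl fun k _ => by ring
  have h2 : (Aᵀ *ᵥ y) ⬝ᵥ x = y ⬝ᵥ A *ᵥ x := by
    rw [Matrix.mulVec_transpose]
    rw [← Matrix.dotProduct_mulVec]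
  rw [← Matrix.mulVec_mulVec, ← Matrix.mulVec_mulVec, h1, Matrix.mulVec_smul, dotProduct_smul,
    h2, smul_eq_mul, sq]

def mkP (d : ℕ) (hd : 6 ≤ d) (L : List (ℝ × Fin 6 × Fin 6)) : MvPolynomial (Fin d) ℝ :=
  (L.map fun t => MvPolynomial.C t.1 *
    (MvPolynomial.X (auxι d hd t.2.1) * MvPolynomial.X (auxι d hd t.2.2))).sum

lemma mkP_hom (d : ℕ) (hd : 6 ≤ d) (L : List (ℝ × Fin 6 × Fin 6)) :
    (mkP d hd L).IsHomogeneous 2 := by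
  induction L with
  | nil => exact MvPolynomial.isHomogeneous_zero _ _ _
  | cons a t ih =>
    simp only [mkP, List.map_cons, List.sum_cons] at *
    refine MvPolynomial.IsHomogeneous.add ?_ ih
    have h := (MvPolynomial.isHomogeneous_C _ a.1).mul
      ((MvPolynomial.isHomogeneous_X _ (auxι d hd a.2.1)).mul
        (MvPolynomial.isHomogeneous_X _ (auxι d hd a.2.2)))
    simpa using h

lemma mkP_eval (d : ℕ) (hd : 6 ≤ d) (L : List (ℝ × Fin 6 × Fin 6)) (x : Fin d → ℝ) :
    MvPolynomial.eval x (mkP d hd L) =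
      (L.map fun t => t.1 * (x (auxι d hd t.2.1) * x (auxι d hd t.2.2))).sum := by
  induction L with
  | nil => simp [mkP]
  | cons a t ih =>
    simp only [mkP, List.map_cons, List.sum_cons, _root_.map_add, _root_.map_mul,
      MvPolynomial.eval_C, MvPolynomial.eval_X] at *
    rw [ih]

end

end Stmt9Aux


set_option maxHeartbeats 8000000 in
open Stmt9Aux in
/-- For `d ≥ 6` there is a nonnegative biquadratic form in `d+d` variables
vanishing on the diagonal that is not a sum of squares: there exists `c : ℝ^d → S^d` with
homogeneous degree-2 polynomial entries, `c(x)` positive semidefinite for all `x` and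
`c(x) x = 0` for all `x`, admitting no representation `c(x) = ∑_p A_p x xᵀ A_pᵀ` with
finitely many skew-symmetric matrices `A_p`. -/
theorem stmt9 (d : ℕ) (hd : 6 ≤ d) :
    ∃ c : (Fin d → ℝ) → Matrix (Fin d) (Fin d) ℝ,
      (∀ x, (c x).IsSymm) ∧
      (∀ i j, IsHomPolyFun d 2 (fun x => c x i j)) ∧
      (∀ x, ∀ y : Fin d → ℝ, 0 ≤ y ⬝ᵥ (c x).mulVec y) ∧
      (∀ x, (c x).mulVec x = 0) ∧
      ¬ ∃ (n : ℕ) (A : Fin n → Matrix (Fin d) (Fin d) ℝ),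
          (∀ p, (A p)ᵀ = -(A p)) ∧
          ∀ x, c x = ∑ p, A p * Matrix.vecMulVec x x * (A p)ᵀ := by
  refine ⟨cf d hd, ?_, ?_, ?_, ?_, ?_⟩
  · -- symmetry
    intro x
    show (cf d hd x)ᵀ = cf d hd x
    ext i j
    rw [Matrix.transpose_apply]
    exact cT_symm j.1 i.1 _
  · -- polynomial entries
    intro i j
    rcases i with ⟨iv, hivd⟩
    rcases j with ⟨jv, hjvd⟩
    by_cases hi : iv < 6
    · by_cases hj : jv < 6
      · interval_cases iv <;> interval_cases jv
        · refine ⟨mkP d hd [((2 : ℝ), (5 : Fin 6), (5 : Fin 6)), ((2 : ℝ), (4 : Fin 6), (4 : Fin 6)), ((2 : ℝ), (3 : Fin 6), (3 : Fin 6))], mkP_hom d hd _, fun x => ?_⟩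
          rw [mkP_eval]
          show cT 0 0 (fun k => x (auxι d hd k)) = _
          norm_num [cT, cRow0, cRow1, cRow2, cRow3, cRow4, cRow5]
          try ring
        · refine ⟨mkP d hd [], mkP_hom d hd _, fun x => ?_⟩
          rw [mkP_eval]
          show cT 0 1 (fun k => x (auxι d hd k)) = _
          norm_num [cT, cRow0, cRow1, cRow2, cRow3, cRow4, cRow5]
          try ring
        · refine ⟨mkP d hd [], mkP_hom d hd _, fun x => ?_⟩
          rw [mkP_eval]
          show cT 0 2 (fun k => x (auxι d hd k)) = _
          norm_num [cT, cRow0, cRow1, cRow2, cRow3, cRow4, cRow5]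
          try ring
        · refine ⟨mkP d hd [((-2 : ℝ), (2 : Fin 6), (5 : Fin 6)), ((-2 : ℝ), (1 : Fin 6), (4 : Fin 6)), ((-2 : ℝ), (0 : Fin 6), (3 : Fin 6))], mkP_hom d hd _, fun x => ?_⟩
          rw [mkP_eval]
          show cT 0 3 (fun k => x (auxι d hd k)) = _
          norm_num [cT, cRow0, cRow1, cRow2, cRow3, cRow4, cRow5]
          try ring
        · refine ⟨mkP d hd [((2 : ℝ), (1 : Fin 6), (3 : Fin 6)), ((-2 : ℝ), (0 : Fin 6), (4 : Fin 6))], mkP_hom d hd _, fun x => ?_⟩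
          rw [mkP_eval]
          show cT 0 4 (fun k => x (auxι d hd k)) = _
          norm_num [cT, cRow0, cRow1, cRow2, cRow3, cRow4, cRow5]
          try ring
        · refine ⟨mkP d hd [((2 : ℝ), (2 : Fin 6), (3 : Fin 6)), ((-2 : ℝ), (0 : Fin 6), (5 : Fin 6))], mkP_hom d hd _, fun x => ?_⟩
          rw [mkP_eval]
          show cT 0 5 (fun k => x (auxι d hd k)) = _
          norm_num [cT, cRow0, cRow1, cRow2, cRow3, cRow4, cRow5]
          try ring
        · refine ⟨mkP d hd [], mkP_hom d hd _, fun x => ?_⟩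
          rw [mkP_eval]
          show cT 1 0 (fun k => x (auxι d hd k)) = _
          norm_num [cT, cRow0, cRow1, cRow2, cRow3, cRow4, cRow5]
          try ring
        · refine ⟨mkP d hd [((2 : ℝ), (5 : Fin 6), (5 : Fin 6)), ((2 : ℝ), (4 : Fin 6), (4 : Fin 6)), ((2 : ℝ), (3 : Fin 6), (3 : Fin 6))], mkP_hom d hd _, fun x => ?_⟩
          rw [mkP_eval]
          show cT 1 1 (fun k => x (auxι d hd k)) = _
          norm_num [cT, cRow0, cRow1, cRow2, cRow3, cRow4, cRow5]
          try ring
        · refine ⟨mkP d hd [], mkP_hom d hd _, fun x => ?_⟩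
          rw [mkP_eval]
          show cT 1 2 (fun k => x (auxι d hd k)) = _
          norm_num [cT, cRow0, cRow1, cRow2, cRow3, cRow4, cRow5]
          try ring
        · refine ⟨mkP d hd [((-2 : ℝ), (1 : Fin 6), (3 : Fin 6)), ((2 : ℝ), (0 : Fin 6), (4 : Fin 6))], mkP_hom d hd _, fun x => ?_⟩
          rw [mkP_eval]
          show cT 1 3 (fun k => x (auxι d hd k)) = _
          norm_num [cT, cRow0, cRow1, cRow2, cRow3, cRow4, cRow5]
          try ring
        · refine ⟨mkP d hd [((-2 : ℝ), (2 : Fin 6), (5 : Fin 6)), ((-2 : ℝ), (1 : Fin 6), (4 : Fin 6)), ((-2 : ℝ), (0 : Fin 6), (3 : Fin 6))], mkP_hom d hd _, fun x => ?_⟩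
          rw [mkP_eval]
          show cT 1 4 (fun k => x (auxι d hd k)) = _
          norm_num [cT, cRow0, cRow1, cRow2, cRow3, cRow4, cRow5]
          try ring
        · refine ⟨mkP d hd [((2 : ℝ), (2 : Fin 6), (4 : Fin 6)), ((-2 : ℝ), (1 : Fin 6), (5 : Fin 6))], mkP_hom d hd _, fun x => ?_⟩
          rw [mkP_eval]
          show cT 1 5 (fun k => x (auxι d hd k)) = _
          norm_num [cT, cRow0, cRow1, cRow2, cRow3, cRow4, cRow5]
          try ring
        · refine ⟨mkP d hd [], mkP_hom d hd _, fun x => ?_⟩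
          rw [mkP_eval]
          show cT 2 0 (fun k => x (auxι d hd k)) = _
          norm_num [cT, cRow0, cRow1, cRow2, cRow3, cRow4, cRow5]
          try ring
        · refine ⟨mkP d hd [], mkP_hom d hd _, fun x => ?_⟩
          rw [mkP_eval]
          show cT 2 1 (fun k => x (auxι d hd k)) = _
          norm_num [cT, cRow0, cRow1, cRow2, cRow3, cRow4, cRow5]
          try ring
        · refine ⟨mkP d hd [((2 : ℝ), (5 : Fin 6), (5 : Fin 6)), ((2 : ℝ), (4 : Fin 6), (4 : Fin 6)), ((2 : ℝ), (3 : Fin 6), (3 : Fin 6))], mkP_hom d hd _, fun x => ?_⟩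
          rw [mkP_eval]
          show cT 2 2 (fun k => x (auxι d hd k)) = _
          norm_num [cT, cRow0, cRow1, cRow2, cRow3, cRow4, cRow5]
          try ring
        · refine ⟨mkP d hd [((-2 : ℝ), (2 : Fin 6), (3 : Fin 6)), ((2 : ℝ), (0 : Fin 6), (5 : Fin 6))], mkP_hom d hd _, fun x => ?_⟩
          rw [mkP_eval]
          show cT 2 3 (fun k => x (auxι d hd k)) = _
          norm_num [cT, cRow0, cRow1, cRow2, cRow3, cRow4, cRow5]
          try ring
        · refine ⟨mkP d hd [((-2 : ℝ), (2 : Fin 6), (4 : Fin 6)), ((2 : ℝ), (1 : Fin 6), (5 : Fin 6))], mkP_hom d hd _, fun x => ?_⟩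
          rw [mkP_eval]
          show cT 2 4 (fun k => x (auxι d hd k)) = _
          norm_num [cT, cRow0, cRow1, cRow2, cRow3, cRow4, cRow5]
          try ring
        · refine ⟨mkP d hd [((-2 : ℝ), (2 : Fin 6), (5 : Fin 6)), ((-2 : ℝ), (1 : Fin 6), (4 : Fin 6)), ((-2 : ℝ), (0 : Fin 6), (3 : Fin 6))], mkP_hom d hd _, fun x => ?_⟩
          rw [mkP_eval]
          show cT 2 5 (fun k => x (auxι d hd k)) = _
          norm_num [cT, cRow0, cRow1, cRow2, cRow3, cRow4, cRow5]
          try ring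
        · refine ⟨mkP d hd [((-2 : ℝ), (2 : Fin 6), (5 : Fin 6)), ((-2 : ℝ), (1 : Fin 6), (4 : Fin 6)), ((-2 : ℝ), (0 : Fin 6), (3 : Fin 6))], mkP_hom d hd _, fun x => ?_⟩
          rw [mkP_eval]
          show cT 3 0 (fun k => x (auxι d hd k)) = _
          norm_num [cT, cRow0, cRow1, cRow2, cRow3, cRow4, cRow5]
          try ring
        · refine ⟨mkP d hd [((-2 : ℝ), (1 : Fin 6), (3 : Fin 6)), ((2 : ℝ), (0 : Fin 6), (4 : Fin 6))], mkP_hom d hd _, fun x => ?_⟩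
          rw [mkP_eval]
          show cT 3 1 (fun k => x (auxι d hd k)) = _
          norm_num [cT, cRow0, cRow1, cRow2, cRow3, cRow4, cRow5]
          try ring
        · refine ⟨mkP d hd [((-2 : ℝ), (2 : Fin 6), (3 : Fin 6)), ((2 : ℝ), (0 : Fin 6), (5 : Fin 6))], mkP_hom d hd _, fun x => ?_⟩
          rw [mkP_eval]
          show cT 3 2 (fun k => x (auxι d hd k)) = _
          norm_num [cT, cRow0, cRow1, cRow2, cRow3, cRow4, cRow5]
          try ring
        · refine ⟨mkP d hd [((2 : ℝ), (2 : Fin 6), (2 : Fin 6)), ((2 : ℝ), (1 : Fin 6), (1 : Fin 6)), ((2 : ℝ), (0 : Fin 6), (0 : Fin 6))], mkP_hom d hd _, fun x => ?_⟩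
          rw [mkP_eval]
          show cT 3 3 (fun k => x (auxι d hd k)) = _
          norm_num [cT, cRow0, cRow1, cRow2, cRow3, cRow4, cRow5]
          try ring
        · refine ⟨mkP d hd [], mkP_hom d hd _, fun x => ?_⟩
          rw [mkP_eval]
          show cT 3 4 (fun k => x (auxι d hd k)) = _
          norm_num [cT, cRow0, cRow1, cRow2, cRow3, cRow4, cRow5]
          try ring
        · refine ⟨mkP d hd [], mkP_hom d hd _, fun x => ?_⟩
          rw [mkP_eval]
          show cT 3 5 (fun k => x (auxι d hd k)) = _
          norm_num [cT, cRow0, cRow1, cRow2, cRow3, cRow4, cRow5]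
          try ring
        · refine ⟨mkP d hd [((2 : ℝ), (1 : Fin 6), (3 : Fin 6)), ((-2 : ℝ), (0 : Fin 6), (4 : Fin 6))], mkP_hom d hd _, fun x => ?_⟩
          rw [mkP_eval]
          show cT 4 0 (fun k => x (auxι d hd k)) = _
          norm_num [cT, cRow0, cRow1, cRow2, cRow3, cRow4, cRow5]
          try ring
        · refine ⟨mkP d hd [((-2 : ℝ), (2 : Fin 6), (5 : Fin 6)), ((-2 : ℝ), (1 : Fin 6), (4 : Fin 6)), ((-2 : ℝ), (0 : Fin 6), (3 : Fin 6))], mkP_hom d hd _, fun x => ?_⟩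
          rw [mkP_eval]
          show cT 4 1 (fun k => x (auxι d hd k)) = _
          norm_num [cT, cRow0, cRow1, cRow2, cRow3, cRow4, cRow5]
          try ring
        · refine ⟨mkP d hd [((-2 : ℝ), (2 : Fin 6), (4 : Fin 6)), ((2 : ℝ), (1 : Fin 6), (5 : Fin 6))], mkP_hom d hd _, fun x => ?_⟩
          rw [mkP_eval]
          show cT 4 2 (fun k => x (auxι d hd k)) = _
          norm_num [cT, cRow0, cRow1, cRow2, cRow3, cRow4, cRow5]
          try ring
        · refine ⟨mkP d hd [], mkP_hom d hd _, fun x => ?_⟩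
          rw [mkP_eval]
          show cT 4 3 (fun k => x (auxι d hd k)) = _
          norm_num [cT, cRow0, cRow1, cRow2, cRow3, cRow4, cRow5]
          try ring
        · refine ⟨mkP d hd [((2 : ℝ), (2 : Fin 6), (2 : Fin 6)), ((2 : ℝ), (1 : Fin 6), (1 : Fin 6)), ((2 : ℝ), (0 : Fin 6), (0 : Fin 6))], mkP_hom d hd _, fun x => ?_⟩
          rw [mkP_eval]
          show cT 4 4 (fun k => x (auxι d hd k)) = _
          norm_num [cT, cRow0, cRow1, cRow2, cRow3, cRow4, cRow5]
          try ring
        · refine ⟨mkP d hd [], mkP_hom d hd _, fun x => ?_⟩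
          rw [mkP_eval]
          show cT 4 5 (fun k => x (auxι d hd k)) = _
          norm_num [cT, cRow0, cRow1, cRow2, cRow3, cRow4, cRow5]
          try ring
        · refine ⟨mkP d hd [((2 : ℝ), (2 : Fin 6), (3 : Fin 6)), ((-2 : ℝ), (0 : Fin 6), (5 : Fin 6))], mkP_hom d hd _, fun x => ?_⟩
          rw [mkP_eval]
          show cT 5 0 (fun k => x (auxι d hd k)) = _
          norm_num [cT, cRow0, cRow1, cRow2, cRow3, cRow4, cRow5]
          try ring
        · refine ⟨mkP d hd [((2 : ℝ), (2 : Fin 6), (4 : Fin 6)), ((-2 : ℝ), (1 : Fin 6), (5 : Fin 6))], mkP_hom d hd _, fun x => ?_⟩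
          rw [mkP_eval]
          show cT 5 1 (fun k => x (auxι d hd k)) = _
          norm_num [cT, cRow0, cRow1, cRow2, cRow3, cRow4, cRow5]
          try ring
        · refine ⟨mkP d hd [((-2 : ℝ), (2 : Fin 6), (5 : Fin 6)), ((-2 : ℝ), (1 : Fin 6), (4 : Fin 6)), ((-2 : ℝ), (0 : Fin 6), (3 : Fin 6))], mkP_hom d hd _, fun x => ?_⟩
          rw [mkP_eval]
          show cT 5 2 (fun k => x (auxι d hd k)) = _
          norm_num [cT, cRow0, cRow1, cRow2, cRow3, cRow4, cRow5]
          try ring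
        · refine ⟨mkP d hd [], mkP_hom d hd _, fun x => ?_⟩
          rw [mkP_eval]
          show cT 5 3 (fun k => x (auxι d hd k)) = _
          norm_num [cT, cRow0, cRow1, cRow2, cRow3, cRow4, cRow5]
          try ring
        · refine ⟨mkP d hd [], mkP_hom d hd _, fun x => ?_⟩
          rw [mkP_eval]
          show cT 5 4 (fun k => x (auxι d hd k)) = _
          norm_num [cT, cRow0, cRow1, cRow2, cRow3, cRow4, cRow5]
          try ring
        · refine ⟨mkP d hd [((2 : ℝ), (2 : Fin 6), (2 : Fin 6)), ((2 : ℝ), (1 : Fin 6), (1 : Fin 6)), ((2 : ℝ), (0 : Fin 6), (0 : Fin 6))], mkP_hom d hd _, fun x => ?_⟩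
          rw [mkP_eval]
          show cT 5 5 (fun k => x (auxι d hd k)) = _
          norm_num [cT, cRow0, cRow1, cRow2, cRow3, cRow4, cRow5]
          try ring
      · refine ⟨0, MvPolynomial.isHomogeneous_zero _ _ _, fun x => ?_⟩
        rw [map_zero]
        exact cT_out_j iv jv _ (by omega)
    · refine ⟨0, MvPolynomial.isHomogeneous_zero _ _ _, fun x => ?_⟩
      rw [map_zero]
      exact cT_out_i iv jv _ (by omega)
  · -- PSD
    intro x y
    rw [quadform_eq d hd x y]
    exact keyIneq _ _ _ _ _ _ _ _ _ _ _ _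
  · -- c(x) x = 0
    intro x
    funext i
    show ∑ j, cf d hd x i j * x j = (0 : Fin d → ℝ) i
    by_cases hi : i.1 < 6
    · rw [sum_red d hd _ (fun j hj => by
        rw [show cf d hd x i j = 0 from cT_out_j _ _ _ hj, zero_mul])]
      rcases i with ⟨iv, hivd⟩
      simp only [Fin.val_mk] at hi ⊢
      interval_cases iv <;>
        (simp only [Fin.sum_univ_six, cf, auxι_val, Fin.val_mk]
         norm_num [cT, cRow0, cRow1, cRow2, cRow3, cRow4, cRow5]
         ring)
    · refine (Finset.sum_eq_zero fun j _ => ?_).trans rfl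
      rw [show cf d hd x i j = 0 from cT_out_i _ _ _ (by omega), zero_mul]
  · -- not a sum of squares
    rintro ⟨n, A, hskew, hrep⟩
    have hsq : ∀ x y : Fin d → ℝ,
        y ⬝ᵥ (cf d hd x).mulVec y = ∑ p, (y ⬝ᵥ (A p).mulVec x)^2 := by
      intro x y
      rw [hrep x, dot_sum_mulVec]
      exact Finset.sum_congr rfl fun p _ => quad_rep (A p) x y
    have hq0 : (embV d 0 1 0 0 0 0) ⬝ᵥ (cf d hd (embV d 1 0 0 0 0 0)).mulVec (embV d 0 1 0 0 0 0) = 0 := by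
      rw [quadform_eq]
      norm_num [embV, auxι, Q2E]
    have hz0 : ∀ p, (embV d 0 1 0 0 0 0) ⬝ᵥ (A p).mulVec (embV d 1 0 0 0 0 0) = 0 := by
      intro p
      have hs := (hsq (embV d 1 0 0 0 0 0) (embV d 0 1 0 0 0 0)).symm.trans hq0
      have h0 := (Finset.sum_eq_zero_iff_of_nonneg (fun q _ => sq_nonneg _)).mp hs p
        (Finset.mem_univ p)
      exact (pow_eq_zero_iff two_ne_zero).mp h0
    have hq1 : (embV d 0 0 1 0 0 0) ⬝ᵥ (cf d hd (embV d 1 0 0 0 0 0)).mulVec (embV d 0 0 1 0 0 0) = 0 := by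
      rw [quadform_eq]
      norm_num [embV, auxι, Q2E]
    have hz1 : ∀ p, (embV d 0 0 1 0 0 0) ⬝ᵥ (A p).mulVec (embV d 1 0 0 0 0 0) = 0 := by
      intro p
      have hs := (hsq (embV d 1 0 0 0 0 0) (embV d 0 0 1 0 0 0)).symm.trans hq1
      have h0 := (Finset.sum_eq_zero_iff_of_nonneg (fun q _ => sq_nonneg _)).mp hs p
        (Finset.mem_univ p)
      exact (pow_eq_zero_iff two_ne_zero).mp h0
    have hq2 : (embV d 0 0 1 0 0 0) ⬝ᵥ (cf d hd (embV d 0 1 0 0 0 0)).mulVec (embV d 0 0 1 0 0 0) = 0 := by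
      rw [quadform_eq]
      norm_num [embV, auxι, Q2E]
    have hz2 : ∀ p, (embV d 0 0 1 0 0 0) ⬝ᵥ (A p).mulVec (embV d 0 1 0 0 0 0) = 0 := by
      intro p
      have hs := (hsq (embV d 0 1 0 0 0 0) (embV d 0 0 1 0 0 0)).symm.trans hq2
      have h0 := (Finset.sum_eq_zero_iff_of_nonneg (fun q _ => sq_nonneg _)).mp hs p
        (Finset.mem_univ p)
      exact (pow_eq_zero_iff two_ne_zero).mp h0
    have hq3 : (embV d 0 0 0 0 1 0) ⬝ᵥ (cf d hd (embV d 0 0 0 1 0 0)).mulVec (embV d 0 0 0 0 1 0) = 0 := by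
      rw [quadform_eq]
      norm_num [embV, auxι, Q2E]
    have hz3 : ∀ p, (embV d 0 0 0 0 1 0) ⬝ᵥ (A p).mulVec (embV d 0 0 0 1 0 0) = 0 := by
      intro p
      have hs := (hsq (embV d 0 0 0 1 0 0) (embV d 0 0 0 0 1 0)).symm.trans hq3
      have h0 := (Finset.sum_eq_zero_iff_of_nonneg (fun q _ => sq_nonneg _)).mp hs p
        (Finset.mem_univ p)
      exact (pow_eq_zero_iff two_ne_zero).mp h0
    have hq4 : (embV d 0 0 0 0 0 1) ⬝ᵥ (cf d hd (embV d 0 0 0 1 0 0)).mulVec (embV d 0 0 0 0 0 1) = 0 := by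
      rw [quadform_eq]
      norm_num [embV, auxι, Q2E]
    have hz4 : ∀ p, (embV d 0 0 0 0 0 1) ⬝ᵥ (A p).mulVec (embV d 0 0 0 1 0 0) = 0 := by
      intro p
      have hs := (hsq (embV d 0 0 0 1 0 0) (embV d 0 0 0 0 0 1)).symm.trans hq4
      have h0 := (Finset.sum_eq_zero_iff_of_nonneg (fun q _ => sq_nonneg _)).mp hs p
        (Finset.mem_univ p)
      exact (pow_eq_zero_iff two_ne_zero).mp h0
    have hq5 : (embV d 0 0 0 0 0 1) ⬝ᵥ (cf d hd (embV d 0 0 0 0 1 0)).mulVec (embV d 0 0 0 0 0 1) = 0 := by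
      rw [quadform_eq]
      norm_num [embV, auxι, Q2E]
    have hz5 : ∀ p, (embV d 0 0 0 0 0 1) ⬝ᵥ (A p).mulVec (embV d 0 0 0 0 1 0) = 0 := by
      intro p
      have hs := (hsq (embV d 0 0 0 0 1 0) (embV d 0 0 0 0 0 1)).symm.trans hq5
      have h0 := (Finset.sum_eq_zero_iff_of_nonneg (fun q _ => sq_nonneg _)).mp hs p
        (Finset.mem_univ p)
      exact (pow_eq_zero_iff two_ne_zero).mp h0
    have hq6 : (embV d 0 (-1 : ℝ) 0 1 0 0) ⬝ᵥ (cf d hd (embV d 1 0 0 0 1 0)).mulVec (embV d 0 (-1 : ℝ) 0 1 0 0) = 0 := by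
      rw [quadform_eq]
      norm_num [embV, auxι, Q2E]
    have hz6 : ∀ p, (embV d 0 (-1 : ℝ) 0 1 0 0) ⬝ᵥ (A p).mulVec (embV d 1 0 0 0 1 0) = 0 := by
      intro p
      have hs := (hsq (embV d 1 0 0 0 1 0) (embV d 0 (-1 : ℝ) 0 1 0 0)).symm.trans hq6
      have h0 := (Finset.sum_eq_zero_iff_of_nonneg (fun q _ => sq_nonneg _)).mp hs p
        (Finset.mem_univ p)
      exact (pow_eq_zero_iff two_ne_zero).mp h0
    have hq7 : (embV d 0 0 (-1 : ℝ) 0 1 0) ⬝ᵥ (cf d hd (embV d 0 1 0 0 0 1)).mulVec (embV d 0 0 (-1 : ℝ) 0 1 0) = 0 := by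
      rw [quadform_eq]
      norm_num [embV, auxι, Q2E]
    have hz7 : ∀ p, (embV d 0 0 (-1 : ℝ) 0 1 0) ⬝ᵥ (A p).mulVec (embV d 0 1 0 0 0 1) = 0 := by
      intro p
      have hs := (hsq (embV d 0 1 0 0 0 1) (embV d 0 0 (-1 : ℝ) 0 1 0)).symm.trans hq7
      have h0 := (Finset.sum_eq_zero_iff_of_nonneg (fun q _ => sq_nonneg _)).mp hs p
        (Finset.mem_univ p)
      exact (pow_eq_zero_iff two_ne_zero).mp h0
    have hq8 : (embV d 0 0 (-1 : ℝ) 1 0 0) ⬝ᵥ (cf d hd (embV d 1 0 0 0 0 1)).mulVec (embV d 0 0 (-1 : ℝ) 1 0 0) = 0 := by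
      rw [quadform_eq]
      norm_num [embV, auxι, Q2E]
    have hz8 : ∀ p, (embV d 0 0 (-1 : ℝ) 1 0 0) ⬝ᵥ (A p).mulVec (embV d 1 0 0 0 0 1) = 0 := by
      intro p
      have hs := (hsq (embV d 1 0 0 0 0 1) (embV d 0 0 (-1 : ℝ) 1 0 0)).symm.trans hq8
      have h0 := (Finset.sum_eq_zero_iff_of_nonneg (fun q _ => sq_nonneg _)).mp hs p
        (Finset.mem_univ p)
      exact (pow_eq_zero_iff two_ne_zero).mp h0
    have hstar : (embV d 0 0 0 1 0 0) ⬝ᵥ (cf d hd (embV d 1 0 0 0 0 0)).mulVec (embV d 0 0 0 1 0 0) = 2 := by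
      rw [quadform_eq]
      norm_num [embV, auxι, Q2E]
    have hzero : ∀ p : Fin n, (embV d 0 0 0 1 0 0) ⬝ᵥ (A p).mulVec (embV d 1 0 0 0 0 0) = 0 := by
      intro p
      have hsk : ∀ a b : Fin 6, A p (auxι d hd a) (auxι d hd b)
          = -(A p (auxι d hd b) (auxι d hd a)) := by
        intro a b
        have h := congrFun (congrFun (hskew p) (auxι d hd b)) (auxι d hd a)
        simpa using h
      have hb0 := bilin_embV d hd (A p) 1 0 0 0 0 0 0 1 0 0 0 0
      have hb1 := bilin_embV d hd (A p) 1 0 0 0 0 0 0 0 1 0 0 0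
      have hb2 := bilin_embV d hd (A p) 0 1 0 0 0 0 0 0 1 0 0 0
      have hb3 := bilin_embV d hd (A p) 0 0 0 1 0 0 0 0 0 0 1 0
      have hb4 := bilin_embV d hd (A p) 0 0 0 1 0 0 0 0 0 0 0 1
      have hb5 := bilin_embV d hd (A p) 0 0 0 0 1 0 0 0 0 0 0 1
      have hb6 := bilin_embV d hd (A p) 1 0 0 0 1 0 0 (-1 : ℝ) 0 1 0 0
      have hb7 := bilin_embV d hd (A p) 0 1 0 0 0 1 0 0 (-1 : ℝ) 0 1 0
      have hb8 := bilin_embV d hd (A p) 1 0 0 0 0 1 0 0 (-1 : ℝ) 1 0 0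
      have h30 : A p (auxι d hd 3) (auxι d hd 0) = 0 := by
        linear_combination (1/2) * hz0 p + (-(1/2)) * hb0 + (1/2) * hz1 p + (-(1/2)) * hb1 + (-1/2) * hz2 p + (1/2) * hb2 + (1/2) * hz3 p + (-(1/2)) * hb3 + (1/2) * hz4 p + (-(1/2)) * hb4 + (-1/2) * hz5 p + (1/2) * hb5 + (1/2) * hz6 p + (-(1/2)) * hb6 + (-1/2) * hz7 p + (1/2) * hb7 + (1/2) * hz8 p + (-(1/2)) * hb8 + (1/2) * hsk 1 4 + (-1/2) * hsk 3 4 + (-1/2) * hsk 3 5 + (1/2) * hsk 4 5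
      rw [bilin_embV d hd (A p) 1 0 0 0 0 0 0 0 0 1 0 0]
      linear_combination h30
    have hcontr : (2:ℝ) = ∑ p, ((embV d 0 0 0 1 0 0) ⬝ᵥ (A p).mulVec (embV d 1 0 0 0 0 0))^2 := by
      rw [← hsq, hstar]
    rw [Finset.sum_eq_zero (fun p _ => by rw [hzero p]; ring)] at hcontr
    norm_num at hcontr
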